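/- arXiv:2301.09532 — 2 statements merged into one kernel-verified Lean document; each statement's English description precedes it below -/
import Mathlib

section
/- There is no injective group homomorphism from the symmetric group Σ₃ on three letters into the special unitary group SU(2) of 2×2 complex matrices. -/
lemma order_two_SU2 (A : Matrix (Fin 2) (Fin 2) ℂ) (h2 : A * A = 1) (hd : A.det = 1) :
    A = 1 ∨ A = -1 := by
  set a := A 0 0; set b := A 0 1; set c := A 1 0; set d := A 1 1
  have hA : A = !![a, b; c, d] := by rw [Matrix.eta_fin_two A]
  rw [hA] at h2 hd ⊢
  rw [Matrix.det_fin_two_of] at hd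
  simp only [Matrix.mul_fin_two] at h2
  have h00 : a * a + b * c = 1 := by
    have := congrFun (congrFun h2 0) 0; simpa using this
  have h01 : a * b + b * d = 0 := by
    have := congrFun (congrFun h2 0) 1; simpa using this
  have h10 : c * a + d * c = 0 := by
    have := congrFun (congrFun h2 1) 0; simpa using this
  have h11 : c * b + d * d = 1 := by
    have := congrFun (congrFun h2 1) 1; simpa using this
  by_cases htr : a + d = 0
  · exfalso
    have : (0 : ℂ) = 2 := by linear_combination hd + h00 - a * htr
    norm_num at this
  · have hb : b = 0 := by
      rcases mul_eq_zero.mp (by linear_combination h01 : b * (a + d) = 0) with h | h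
      · exact h
      · exact absurd h htr
    have hc : c = 0 := by
      rcases mul_eq_zero.mp (by linear_combination h10 : c * (a + d) = 0) with h | h
      · exact h
      · exact absurd h htr
    rw [hb, hc] at h00 hd
    simp only [mul_zero, zero_mul, add_zero, sub_zero] at h00 hd
    have ha0 : a ≠ 0 := by intro h; rw [h] at h00; simp at h00
    have had : d = a := by
      have : a * (d - a) = 0 := by linear_combination hd - h00
      rcases mul_eq_zero.mp this with h | h
      · exact absurd h ha0
      · linear_combination h
    rcases mul_self_eq_one_iff.mp h00 with h1 | h1 <;>
      rw [hb, hc, had, h1] <;> [left; right] <;>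
      simp [Matrix.one_fin_two]

/-- **Σ₃ does not embed into SU(2).** -/
theorem no_injective_hom_symmGroup3_to_SU2 :
    ¬ ∃ f : Equiv.Perm (Fin 3) →* Matrix.specialUnitaryGroup (Fin 2) ℂ,
        Function.Injective f := by
  rintro ⟨f, hf⟩
  set σ : Equiv.Perm (Fin 3) := Equiv.swap 0 1 with hσ
  set τ : Equiv.Perm (Fin 3) := Equiv.swap 0 2 with hτ
  have hστ : σ ≠ τ := by decide
  have key : ∀ g : Equiv.Perm (Fin 3), g ≠ 1 → g * g = 1 →
      ((f g : Matrix (Fin 2) (Fin 2) ℂ)) = -1 := by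
    intro g hg hgg
    have h2 : (f g : Matrix (Fin 2) (Fin 2) ℂ) * (f g) = 1 := by
      have h : f g * f g = 1 := by rw [← map_mul, hgg, map_one]
      simpa using congrArg Subtype.val h
    have hdet : ((f g : Matrix (Fin 2) (Fin 2) ℂ)).det = 1 :=
      ((Matrix.mem_specialUnitaryGroup_iff).mp (f g).2).2
    rcases order_two_SU2 _ h2 hdet with h | h
    · exfalso
      apply hg
      apply hf
      rw [map_one]
      exact Subtype.ext h
    · exact h
  have hσ1 : (f σ : Matrix (Fin 2) (Fin 2) ℂ) = -1 := key σ (by decide) (by decide)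
  have hτ1 : (f τ : Matrix (Fin 2) (Fin 2) ℂ) = -1 := key τ (by decide) (by decide)
  exact hστ (hf (Subtype.ext (hσ1.trans hτ1.symm)))
end

section
/- There exists an injective group homomorphism from the dicyclic group Dic₃ of order 12 into the special unitary group SU(2) of 2×2 complex matrices. -/
open Complex Matrix

noncomputable section DicSU2Aux

/-- primitive 6-th root of unity -/
def dicζ : ℂ := Complex.exp (2 * Real.pi * Complex.I / 6)

lemma dicζ_prim : IsPrimitiveRoot dicζ 6 :=
  Complex.isPrimitiveRoot_exp 6 (by norm_num)

lemma dicζ_pow_six : dicζ ^ 6 = 1 := dicζ_prim.pow_eq_one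

lemma dicζ_ne_zero : dicζ ≠ 0 := Complex.exp_ne_zero _

/-- the character `ZMod 6 → ℂ`. -/
def dicw (i : ZMod 6) : ℂ := dicζ ^ i.val

lemma dicw_ne_zero (i : ZMod 6) : dicw i ≠ 0 := pow_ne_zero _ dicζ_ne_zero

lemma dicζ_pow_mod (k : ℕ) : dicζ ^ k = dicζ ^ (k % 6) := by
  conv_lhs => rw [← Nat.div_add_mod k 6]
  rw [pow_add, pow_mul, dicζ_pow_six, one_pow, one_mul]

lemma dicw_add (i j : ZMod 6) : dicw (i + j) = dicw i * dicw j := by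
  unfold dicw
  rw [← pow_add, ZMod.val_add, ← dicζ_pow_mod]

lemma dicw_zero : dicw 0 = 1 := by simp [dicw]

lemma dicw_norm (i : ZMod 6) : (starRingEnd ℂ) (dicw i) * dicw i = 1 := by
  unfold dicw
  rw [← Complex.normSq_eq_conj_mul_self]
  have habs : ‖dicζ‖ = 1 := by
    simp only [dicζ, Complex.norm_exp]
    norm_num
  have : Complex.normSq (dicζ ^ (ZMod.val i)) = 1 := by
    rw [← Complex.sq_norm, norm_pow, habs, one_pow, one_pow]
  rw [this]
  norm_num

lemma dicw_conj (i : ZMod 6) : (starRingEnd ℂ) (dicw i) = (dicw i)⁻¹ :=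
  eq_inv_of_mul_eq_one_left (dicw_norm i)

lemma dicw_neg (i : ZMod 6) : dicw (-i) = (starRingEnd ℂ) (dicw i) := by
  have h : dicw (-i) * dicw i = 1 := by rw [← dicw_add, neg_add_cancel, dicw_zero]
  exact mul_right_cancel₀ (dicw_ne_zero i) (h.trans (dicw_norm i).symm)

lemma dicw_sub (i j : ZMod 6) : dicw (i - j) = dicw i * (starRingEnd ℂ) (dicw j) := by
  rw [sub_eq_add_neg, dicw_add, dicw_neg]

lemma dicw_three : dicw 3 = -1 := by
  have : dicw 3 = dicζ ^ 3 := by norm_num [dicw]; rfl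
  rw [this]
  unfold dicζ
  rw [← Complex.exp_nat_mul]
  have : (3 : ℕ) * (2 * (Real.pi : ℂ) * Complex.I / 6) = Real.pi * Complex.I := by
    push_cast; ring
  rw [this, Complex.exp_pi_mul_I]

lemma dicw_eq_one_iff (i : ZMod 6) : dicw i = 1 ↔ i = 0 := by
  constructor
  · intro h
    have := (dicζ_prim.pow_eq_one_iff_dvd i.val).mp h
    have hv : i.val < 6 := ZMod.val_lt i
    have : i.val = 0 := by omega
    exact (ZMod.val_eq_zero i).mp this
  · rintro rfl; exact dicw_zero

/-- diagonal part -/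
def dicA (i : ZMod 6) : Matrix (Fin 2) (Fin 2) ℂ :=
  !![dicw i, 0; 0, (starRingEnd ℂ) (dicw i)]

/-- anti-diagonal part, representing `x * a^i`. -/
def dicB (i : ZMod 6) : Matrix (Fin 2) (Fin 2) ℂ :=
  !![0, (starRingEnd ℂ) (dicw i); -(dicw i), 0]

lemma star_fin_two (a b c d : ℂ) :
    star !![a, b; c, d]
      = !![starRingEnd ℂ a, starRingEnd ℂ c; starRingEnd ℂ b, starRingEnd ℂ d] := by
  ext i j
  rw [Matrix.star_eq_conjTranspose]
  fin_cases i <;> fin_cases j <;> simp [Matrix.conjTranspose_apply]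

lemma fin2_ext {M N : Matrix (Fin 2) (Fin 2) ℂ} (h00 : M 0 0 = N 0 0) (h01 : M 0 1 = N 0 1)
    (h10 : M 1 0 = N 1 0) (h11 : M 1 1 = N 1 1) : M = N := by
  ext i j
  fin_cases i <;> fin_cases j <;> assumption

lemma dicA_mem (i : ZMod 6) : dicA i ∈ Matrix.specialUnitaryGroup (Fin 2) ℂ := by
  rw [Matrix.mem_specialUnitaryGroup_iff]
  have h := dicw_norm i
  constructor
  · rw [Matrix.mem_unitaryGroup_iff]
    unfold dicA
    rw [star_fin_two, Matrix.mul_fin_two, Matrix.one_fin_two]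
    refine fin2_ext ?_ ?_ ?_ ?_ <;> simp <;> linear_combination h
  · unfold dicA
    rw [Matrix.det_fin_two_of]
    linear_combination h

lemma dicB_mem (i : ZMod 6) : dicB i ∈ Matrix.specialUnitaryGroup (Fin 2) ℂ := by
  rw [Matrix.mem_specialUnitaryGroup_iff]
  have h := dicw_norm i
  constructor
  · rw [Matrix.mem_unitaryGroup_iff]
    unfold dicB
    rw [star_fin_two, Matrix.mul_fin_two, Matrix.one_fin_two]
    refine fin2_ext ?_ ?_ ?_ ?_ <;> simp <;> linear_combination h
  · unfold dicB
    rw [Matrix.det_fin_two_of]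
    simp
    linear_combination h

/-- the embedding as a bare function. -/
def dicF : QuaternionGroup 3 → Matrix.specialUnitaryGroup (Fin 2) ℂ
  | QuaternionGroup.a i => ⟨dicA i, dicA_mem i⟩
  | QuaternionGroup.xa i => ⟨dicB i, dicB_mem i⟩

lemma dicF_mul (x y : QuaternionGroup 3) : dicF (x * y) = dicF x * dicF y := by
  have h3 : ((3 : ℕ) : ZMod (2 * 3)) = (3 : ZMod 6) := by decide
  rcases x with i | i <;> rcases y with j | j <;>
    · apply Subtype.ext
      simp only [QuaternionGroup.a_mul_a, QuaternionGroup.a_mul_xa,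
        QuaternionGroup.xa_mul_a, QuaternionGroup.xa_mul_xa, h3, dicF, dicA, dicB,
        Submonoid.coe_mul, Matrix.mul_fin_two]
      refine fin2_ext ?_ ?_ ?_ ?_ <;>
        simp [dicw_add, dicw_sub, dicw_neg, dicw_three, _root_.map_mul, Complex.conj_conj,
          sub_eq_add_neg] <;>
        ring

lemma dicF_one : dicF 1 = 1 := by
  apply Subtype.ext
  show dicA 0 = (1 : Matrix (Fin 2) (Fin 2) ℂ)
  rw [dicA, dicw_zero, Matrix.one_fin_two]
  simp

end DicSU2Aux

/-- **Dic₃ embeds into SU(2).**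
There exists an injective group homomorphism from the dicyclic group of order 12
(`QuaternionGroup 3` in Mathlib) into the special unitary group of 2×2 complex
matrices. -/
theorem exists_injective_hom_dicyclic3_to_SU2 :
    ∃ f : QuaternionGroup 3 →* Matrix.specialUnitaryGroup (Fin 2) ℂ,
      Function.Injective f := by
  refine ⟨⟨⟨dicF, dicF_one⟩, dicF_mul⟩, ?_⟩
  rw [injective_iff_map_eq_one]
  rintro (i | i) h
  · have h' : dicA i = 1 := congrArg Subtype.val h
    have h0 : dicw i = 1 := by
      have := congrFun (congrFun h' 0) 0
      simpa [dicA, Matrix.one_fin_two] using this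
    rw [dicw_eq_one_iff] at h0
    rw [h0]
    rfl
  · exfalso
    have h' : dicB i = 1 := congrArg Subtype.val h
    have := congrFun (congrFun h' 0) 0
    simp [dicB, Matrix.one_fin_two] at this
end
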